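/- In a 7-dimensional algebra from the class TLb_7 with adapted basis e_0,...,e_6 and brackets as in the defining multiplication table (with parameters b_{00}, b_{01}, b_{11}, a_{14}, a_{15}, a_{25}, b_{12}, b_{13}, b_{14}, b_{23}, b_{15}, b_{24}), the Leibniz identity applied to the triple (e_0, e_1, e_2) forces b_{13} = a_{15}. -/

import Mathlib

/-- In an algebra from TLb₇ (multiplication table as in the paper), the Leibniz
identity applied to the triple (e₀,e₁,e₂) forces b₁₃ = a₁₅. -/
theorem TLb7_leibniz_e0e1e2 {L : Type*} [AddCommGroup L] [Module ℂ L]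
    (B : L →ₗ[ℂ] L →ₗ[ℂ] L) (e : Module.Basis (Fin 7) ℂ L)
    (b00 b01 b11 a14 a15 a25 b12 b13 b14 b23 b15 b24 : ℂ)
    (h10 : B (e 1) (e 0) = e 2)
    (h20 : B (e 2) (e 0) = e 3)
    (h30 : B (e 3) (e 0) = e 4)
    (h40 : B (e 4) (e 0) = e 5)
    (h50 : B (e 5) (e 0) = e 6)
    (h02 : B (e 0) (e 2) = -(e 3))
    (h03 : B (e 0) (e 3) = -(e 4))
    (h04 : B (e 0) (e 4) = -(e 5))
    (h05 : B (e 0) (e 5) = -(e 6))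
    (h00 : B (e 0) (e 0) = b00 • e 6)
    (h01 : B (e 0) (e 1) = -(e 2) + b01 • e 6)
    (h11 : B (e 1) (e 1) = b11 • e 6)
    (h12 : B (e 1) (e 2) = a14 • e 4 + a15 • e 5 + b12 • e 6)
    (h21 : B (e 2) (e 1) = -(a14 • e 4 + a15 • e 5 + b12 • e 6))
    (h13 : B (e 1) (e 3) = a14 • e 5 + b13 • e 6)
    (h31 : B (e 3) (e 1) = -(a14 • e 5 + b13 • e 6))
    (h14 : B (e 1) (e 4) = (-a25) • e 5 + b14 • e 6)
    (h41 : B (e 4) (e 1) = -((-a25) • e 5 + b14 • e 6))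
    (h23 : B (e 2) (e 3) = a25 • e 5 + b23 • e 6)
    (h32 : B (e 3) (e 2) = -(a25 • e 5 + b23 • e 6))
    (h15 : B (e 1) (e 5) = b15 • e 6)
    (h51 : B (e 5) (e 1) = -(b15 • e 6))
    (h24 : B (e 2) (e 4) = b24 • e 6)
    (h42 : B (e 4) (e 2) = -(b24 • e 6))
    (h22 : B (e 2) (e 2) = 0) (h33 : B (e 3) (e 3) = 0)
    (h44 : B (e 4) (e 4) = 0) (h55 : B (e 5) (e 5) = 0)
    (h25 : B (e 2) (e 5) = 0) (h52 : B (e 5) (e 2) = 0)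
    (h34 : B (e 3) (e 4) = 0) (h43 : B (e 4) (e 3) = 0)
    (h35 : B (e 3) (e 5) = 0) (h53 : B (e 5) (e 3) = 0)
    (h45 : B (e 4) (e 5) = 0) (h54 : B (e 5) (e 4) = 0)
    (h6 : ∀ j : Fin 7, B (e 6) (e j) = 0 ∧ B (e j) (e 6) = 0)
    (hleib : B (e 0) (B (e 1) (e 2)) = B (B (e 0) (e 1)) (e 2) - B (B (e 0) (e 2)) (e 1)) :
    b13 = a15 := by
  have h62 := (h6 2).1
  have h06 := (h6 0).2
  simp only [h12, h01, h02, map_add, map_smul, map_neg, h04, h05, h06,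
    LinearMap.add_apply, LinearMap.neg_apply, LinearMap.smul_apply,
    h22, h62, h31, smul_zero, smul_neg, neg_neg, neg_zero, add_zero, zero_add] at hleib
  have h2 : (-a14) • e 5 + (-a15) • e 6 = (-a14) • e 5 + (-b13) • e 6 := by
    simpa [neg_smul, sub_eq_add_neg, add_comm, add_assoc, neg_add] using hleib
  exact (smul_left_injective ℂ (e.ne_zero 6) (by simpa using add_left_cancel h2)).symm
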